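/- In the OPT setup, let F ⊆ {1,…,m} be any set of rows with X_{W*} ⊆ F, sprank(A^S_F) = n − 1, and |F \ X_{W*}| ≥ (n − 1) − sprank(A^S_{X_{W*}}). Then |F| = |OPT| (hence m − |F| = spcospark(A^S)). -/

import Mathlib

open Matrix MeasureTheory

/-- `A` has sparsity pattern `S`: the nonzero entries of `A` are exactly those indexed by `S`. -/
def HasPattern {m n : ℕ} (S : Finset (Fin m × Fin n)) (A : Matrix (Fin m) (Fin n) ℝ) : Prop :=
  ∀ i j, A i j ≠ 0 ↔ (i, j) ∈ S

/-- Generic rank of the class of matrices with sparsity pattern `S`. -/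
noncomputable def sprank {m n : ℕ} (S : Finset (Fin m × Fin n)) : ℕ :=
  sSup {r : ℕ | ∃ A : Matrix (Fin m) (Fin n) ℝ, HasPattern S A ∧ A.rank = r}

/-- The sparsity pattern restricted to the rows in `T` (rows outside `T` become zero). -/
def patternOn {m n : ℕ} (S : Finset (Fin m × Fin n)) (T : Finset (Fin m)) :
    Finset (Fin m × Fin n) :=
  S.filter (fun p => p.1 ∈ T)

/-- A matching of a sparsity pattern: any two distinct pairs differ in both coordinates. -/
def IsMatching {m n : ℕ} (M : Finset (Fin m × Fin n)) : Prop :=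
  ∀ p ∈ M, ∀ q ∈ M, p ≠ q → p.1 ≠ q.1 ∧ p.2 ≠ q.2

/-- `nu S` : maximum cardinality of a matching contained in `S`. -/
noncomputable def nu {m n : ℕ} (S : Finset (Fin m × Fin n)) : ℕ :=
  sSup {k : ℕ | ∃ M ⊆ S, IsMatching M ∧ M.card = k}

/-- ℓ₀ "norm": number of nonzero entries of a vector. -/
noncomputable def l0 {m : ℕ} (y : Fin m → ℝ) : ℕ :=
  (Finset.univ.filter (fun i => y i ≠ 0)).card

/-- `cospark A` : minimum of `‖A x‖₀` over nonzero `x`. -/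
noncomputable def cospark {m n : ℕ} (A : Matrix (Fin m) (Fin n) ℝ) : ℕ :=
  sInf {k : ℕ | ∃ x : Fin n → ℝ, x ≠ 0 ∧ l0 (A.mulVec x) = k}

/-- Generic cospark of the class of matrices with sparsity pattern `S`. -/
noncomputable def spcospark {m n : ℕ} (S : Finset (Fin m × Fin n)) : ℕ :=
  sSup {k : ℕ | ∃ A : Matrix (Fin m) (Fin n) ℝ, HasPattern S A ∧ cospark A = k}

/-- The row-submatrix `A_T`, realized as `A` with the rows outside `T` zeroed out. -/
noncomputable def rowRestrict {m n : ℕ} (A : Matrix (Fin m) (Fin n) ℝ) (T : Finset (Fin m)) :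
    Matrix (Fin m) (Fin n) ℝ :=
  Matrix.of fun i j => if i ∈ T then A i j else 0

/-- `X_W` : the rows of the pattern `S` all of whose nonzero positions lie in the columns `W`. -/
def rowsIn {m n : ℕ} (S : Finset (Fin m × Fin n)) (W : Finset (Fin n)) : Finset (Fin m) :=
  Finset.univ.filter (fun i => ∀ j, (i, j) ∈ S → j ∈ W)

section Basics
variable {m n : ℕ} {P P' : Finset (Fin m × Fin n)}

lemma IsMatching.eq_of_fst {N : Finset (Fin m × Fin n)} (h : IsMatching N) {p q : Fin m × Fin n}
    (hp : p ∈ N) (hq : q ∈ N) (hpq : p.1 = q.1) : p = q := by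
  by_contra hne
  exact (h p hp q hq hne).1 hpq

lemma IsMatching.eq_of_snd {N : Finset (Fin m × Fin n)} (h : IsMatching N) {p q : Fin m × Fin n}
    (hp : p ∈ N) (hq : q ∈ N) (hpq : p.2 = q.2) : p = q := by
  by_contra hne
  exact (h p hp q hq hne).2 hpq

lemma IsMatching.card_image_fst {N : Finset (Fin m × Fin n)} (h : IsMatching N) :
    (N.image Prod.fst).card = N.card :=
  Finset.card_image_of_injOn (fun p hp q hq hpq => h.eq_of_fst hp hq hpq)

lemma IsMatching.card_image_snd {N : Finset (Fin m × Fin n)} (h : IsMatching N) :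
    (N.image Prod.snd).card = N.card :=
  Finset.card_image_of_injOn (fun p hp q hq hpq => h.eq_of_snd hp hq hpq)

lemma IsMatching.card_le_n {N : Finset (Fin m × Fin n)} (h : IsMatching N) : N.card ≤ n := by
  rw [← h.card_image_snd]
  simpa using (Finset.card_le_univ (N.image Prod.snd))

lemma IsMatching.subset {N N' : Finset (Fin m × Fin n)} (h : IsMatching N) (hsub : N' ⊆ N) :
    IsMatching N' := fun p hp q hq hne => h p (hsub hp) q (hsub hq) hne

lemma nu_bddAbove : BddAbove {k : ℕ | ∃ M ⊆ P, IsMatching M ∧ M.card = k} := by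
  refine ⟨P.card, ?_⟩
  rintro k ⟨M, hMP, _, rfl⟩
  exact Finset.card_le_card hMP

lemma nu_set_nonempty : {k : ℕ | ∃ M ⊆ P, IsMatching M ∧ M.card = k}.Nonempty :=
  ⟨0, ∅, Finset.empty_subset _, fun p hp => absurd hp (Finset.notMem_empty p), Finset.card_empty⟩

lemma exists_nu (P : Finset (Fin m × Fin n)) : ∃ M ⊆ P, IsMatching M ∧ M.card = nu P :=
  Nat.sSup_mem nu_set_nonempty nu_bddAbove

lemma card_le_nu {M : Finset (Fin m × Fin n)} (hMP : M ⊆ P) (hM : IsMatching M) :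
    M.card ≤ nu P :=
  le_csSup nu_bddAbove ⟨M, hMP, hM, rfl⟩

lemma nu_le {k : ℕ} (h : ∀ M ⊆ P, IsMatching M → M.card ≤ k) : nu P ≤ k := by
  apply csSup_le nu_set_nonempty
  rintro a ⟨M, hMP, hM, rfl⟩
  exact h M hMP hM

lemma nu_mono (h : P ⊆ P') : nu P ≤ nu P' :=
  nu_le fun M hMP hM => card_le_nu (hMP.trans h) hM

lemma nu_le_n : nu P ≤ n := nu_le fun _ _ hM => hM.card_le_n

lemma patternOn_subset (T : Finset (Fin m)) : patternOn P T ⊆ P := Finset.filter_subset _ _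

lemma mem_patternOn {T : Finset (Fin m)} {p : Fin m × Fin n} :
    p ∈ patternOn P T ↔ p ∈ P ∧ p.1 ∈ T := Finset.mem_filter

lemma patternOn_mono {T T' : Finset (Fin m)} (h : T ⊆ T') : patternOn P T ⊆ patternOn P T' := by
  intro p hp
  rw [mem_patternOn] at *
  exact ⟨hp.1, h hp.2⟩

lemma patternOn_univ : patternOn P Finset.univ = P := by
  simp [patternOn]

end Basics

section SprankBasics
variable {m n : ℕ} {P : Finset (Fin m × Fin n)}

lemma hasPattern_indicator (P : Finset (Fin m × Fin n)) :
    HasPattern P (Matrix.of fun i j => if (i, j) ∈ P then (1 : ℝ) else 0) := by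
  intro i j
  by_cases h : (i, j) ∈ P <;> simp [h]

lemma sprank_set_nonempty :
    {r : ℕ | ∃ A : Matrix (Fin m) (Fin n) ℝ, HasPattern P A ∧ A.rank = r}.Nonempty :=
  ⟨_, _, hasPattern_indicator P, rfl⟩

lemma sprank_bddAbove :
    BddAbove {r : ℕ | ∃ A : Matrix (Fin m) (Fin n) ℝ, HasPattern P A ∧ A.rank = r} := by
  refine ⟨n, ?_⟩
  rintro r ⟨A, _, rfl⟩
  exact A.rank_le_width

lemma exists_sprank (P : Finset (Fin m × Fin n)) :
    ∃ A : Matrix (Fin m) (Fin n) ℝ, HasPattern P A ∧ A.rank = sprank P :=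
  Nat.sSup_mem sprank_set_nonempty sprank_bddAbove

lemma rank_le_sprank {A : Matrix (Fin m) (Fin n) ℝ} (hA : HasPattern P A) :
    A.rank ≤ sprank P :=
  le_csSup sprank_bddAbove ⟨A, hA, rfl⟩

lemma sprank_le {k : ℕ} (h : ∀ A : Matrix (Fin m) (Fin n) ℝ, HasPattern P A → A.rank ≤ k) :
    sprank P ≤ k := by
  apply csSup_le sprank_set_nonempty
  rintro r ⟨A, hA, rfl⟩
  exact h A hA

lemma hasPattern_rowRestrict {A : Matrix (Fin m) (Fin n) ℝ} (hA : HasPattern P A)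
    (T : Finset (Fin m)) : HasPattern (patternOn P T) (rowRestrict A T) := by
  intro i j
  by_cases h : i ∈ T
  · simp only [rowRestrict, Matrix.of_apply, if_pos h, patternOn, Finset.mem_filter, h, and_true]
    exact hA i j
  · simp [rowRestrict, h, patternOn, Finset.mem_filter]

end SprankBasics

section SupportLemmas
variable {m n : ℕ}

lemma rank_le_card_support_cols (A : Matrix (Fin m) (Fin n) ℝ) (C : Finset (Fin n))
    (h : ∀ i j, A i j ≠ 0 → j ∈ C) : A.rank ≤ C.card := by
  classical
  rw [Matrix.rank_eq_finrank_span_cols]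
  have hsub : Set.range Aᵀ ⊆ insert 0 ((C.image Aᵀ : Finset (Fin m → ℝ)) : Set (Fin m → ℝ)) := by
    rintro - ⟨j, rfl⟩
    by_cases hj : j ∈ C
    · exact Set.mem_insert_iff.2 (Or.inr (Finset.mem_coe.2 (Finset.mem_image_of_mem _ hj)))
    · left
      funext i
      by_contra hij
      exact hj (h i j (by simpa [Matrix.transpose_apply] using hij))
  calc Module.finrank ℝ (Submodule.span ℝ (Set.range Aᵀ))
      ≤ Module.finrank ℝ (Submodule.span ℝ
        (insert 0 ((C.image Aᵀ : Finset (Fin m → ℝ)) : Set (Fin m → ℝ)))) := by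
        apply Submodule.finrank_mono
        exact Submodule.span_mono hsub
    _ = Module.finrank ℝ (Submodule.span ℝ
        (((C.image Aᵀ : Finset (Fin m → ℝ)) : Set (Fin m → ℝ)))) := by
        rw [Submodule.span_insert_zero]
    _ ≤ (C.image Aᵀ).card := finrank_span_finset_le_card _
    _ ≤ C.card := Finset.card_image_le

lemma rank_le_card_support_rows (A : Matrix (Fin m) (Fin n) ℝ) (R : Finset (Fin m))
    (h : ∀ i j, A i j ≠ 0 → i ∈ R) : A.rank ≤ R.card := by
  rw [← Matrix.rank_transpose]
  exact rank_le_card_support_cols Aᵀ R (fun j i hji => h i j (by simpa using hji))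
end SupportLemmas

section RankLemmas
variable {m n : ℕ}

lemma matrix_rank_add_le (A B : Matrix (Fin m) (Fin n) ℝ) : (A + B).rank ≤ A.rank + B.rank := by
  unfold Matrix.rank
  have hr : LinearMap.range (A + B).mulVecLin ≤
      LinearMap.range A.mulVecLin ⊔ LinearMap.range B.mulVecLin := by
    rintro - ⟨x, rfl⟩
    rw [Matrix.mulVecLin_add]
    exact Submodule.mem_sup.2 ⟨A.mulVecLin x, ⟨x, rfl⟩, B.mulVecLin x, ⟨x, rfl⟩, rfl⟩
  exact le_trans (Submodule.finrank_mono hr)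
    (Submodule.finrank_add_le_finrank_add_finrank _ _)

lemma rank_submatrix_le' {k : ℕ} (B : Matrix (Fin m) (Fin n) ℝ) (r : Fin k → Fin m)
    (c : Fin k → Fin n) : (B.submatrix r c).rank ≤ B.rank := by
  classical
  have h1 : (Matrix.of fun (a : Fin k) (b : Fin m) => if b = r a then (1:ℝ) else 0) * B =
      B.submatrix r id := by
    ext a b
    simp [Matrix.mul_apply]
  have h2 : (B.submatrix r id) * (Matrix.of fun (b : Fin n) (a : Fin k) =>
      if b = c a then (1:ℝ) else 0) = B.submatrix r c := by
    ext a a'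
    simp [Matrix.mul_apply]
  calc (B.submatrix r c).rank = ((B.submatrix r id) *
        (Matrix.of fun (b : Fin n) (a : Fin k) => if b = c a then (1:ℝ) else 0)).rank := by
        rw [h2]
    _ ≤ (B.submatrix r id).rank := Matrix.rank_mul_le_left _ _
    _ = ((Matrix.of fun (a : Fin k) (b : Fin m) => if b = r a then (1:ℝ) else 0) * B).rank := by
        rw [h1]
    _ ≤ B.rank := Matrix.rank_mul_le_right _ _

end RankLemmas

lemma rank_le_nu {m n : ℕ} {P : Finset (Fin m × Fin n)} {A : Matrix (Fin m) (Fin n) ℝ}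
    (hA : HasPattern P A) : A.rank ≤ nu P := by
  classical
  by_cases hn0 : n = 0
  · subst hn0
    exact le_trans A.rank_le_width (Nat.zero_le _)
  by_cases hm : m ≤ nu P
  · exact le_trans (A.rank_le_card_height.trans (by simp)) hm
  push_neg at hm
  set ν := nu P with hν
  set d := m - ν - 1 with hd
  set nbr : Fin m → Finset (Fin n) := fun i => Finset.univ.filter (fun j => (i, j) ∈ P)
    with hnbr
  have key : ∃ R : Finset (Fin m), (R.biUnion nbr).card + d < R.card := by
    by_contra hcon
    push_neg at hcon
    set t : Fin m → Finset (Fin n ⊕ Fin d) :=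
      fun i => (nbr i).image Sum.inl ∪ Finset.univ.image Sum.inr with ht
    have hall : ∀ s : Finset (Fin m), s.card ≤ (s.biUnion t).card := by
      intro s
      rcases s.eq_empty_or_nonempty with rfl | hs
      · simp
      have hbi : s.biUnion t =
          (s.biUnion nbr).image Sum.inl ∪ (Finset.univ : Finset (Fin d)).image Sum.inr := by
        ext x
        simp only [ht, Finset.mem_biUnion, Finset.mem_union, Finset.mem_image]
        constructor
        · rintro ⟨i, hi, h | h⟩
          · exact Or.inl (by obtain ⟨j, hj, rfl⟩ := h; exact ⟨j, ⟨i, hi, hj⟩, rfl⟩)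
          · exact Or.inr (by obtain ⟨j, hj, rfl⟩ := h; exact ⟨j, hj, rfl⟩)
        · rintro (⟨j, ⟨i, hi, hj⟩, rfl⟩ | ⟨j, hj, rfl⟩)
          · exact ⟨i, hi, Or.inl ⟨j, hj, rfl⟩⟩
          · obtain ⟨i, hi⟩ := hs
            exact ⟨i, hi, Or.inr ⟨j, hj, rfl⟩⟩
      have hdis : Disjoint ((s.biUnion nbr).image Sum.inl)
          ((Finset.univ : Finset (Fin d)).image Sum.inr) := by
        simp [Finset.disjoint_left]
      rw [hbi, Finset.card_union_of_disjoint hdis,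
        Finset.card_image_of_injective _ Sum.inl_injective,
        Finset.card_image_of_injective _ Sum.inr_injective, Finset.card_univ, Fintype.card_fin]
      exact hcon s
    obtain ⟨f, hfinj, hft⟩ := (Finset.all_card_le_biUnion_card_iff_exists_injective t).1 hall
    set R₀ : Finset (Fin m) := Finset.univ.filter (fun i => (f i).isLeft) with hR₀
    have hnn : Nonempty (Fin n) := ⟨⟨0, Nat.pos_of_ne_zero hn0⟩⟩
    set g : Fin m → Fin n := fun i => Sum.elim id (fun _ => Classical.arbitrary (Fin n)) (f i)
      with hg
    have hgf : ∀ i ∈ R₀, f i = Sum.inl (g i) := by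
      intro i hi
      rcases h : f i with j | j
      · simp [hg, h]
      · rw [hR₀, Finset.mem_filter] at hi
        rw [h] at hi
        simp at hi
    have hmemP : ∀ i ∈ R₀, (i, g i) ∈ P := by
      intro i hi
      have h1 := hft i
      rw [hgf i hi, ht] at h1
      simp only [Finset.mem_union, Finset.mem_image] at h1
      rcases h1 with ⟨j, hj, hj2⟩ | ⟨j, _, hj2⟩
      · obtain rfl : j = g i := Sum.inl_injective hj2
        rw [hnbr] at hj
        simpa using hj
      · exact absurd hj2 (by simp)
    set M' : Finset (Fin m × Fin n) := R₀.image (fun i => (i, g i)) with hM'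
    have hM'P : M' ⊆ P := by
      intro p hp
      obtain ⟨i, hi, rfl⟩ := Finset.mem_image.1 hp
      exact hmemP i hi
    have hM'match : IsMatching M' := by
      rintro p hp q hq hpq
      obtain ⟨i, hi, rfl⟩ := Finset.mem_image.1 hp
      obtain ⟨i', hi', rfl⟩ := Finset.mem_image.1 hq
      have hine : i ≠ i' := fun h => hpq (by rw [h])
      refine ⟨hine, fun hsnd => hine (hfinj ?_)⟩
      simp only at hsnd
      rw [hgf i hi, hgf i' hi', hsnd]
    have hcard : M'.card = R₀.card :=
      Finset.card_image_of_injective _ (fun a b hab => (Prod.mk.injEq _ _ _ _ ▸ hab : _) |>.1)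
    have h1 : R₀.card ≤ ν := hcard ▸ card_le_nu hM'P hM'match
    have h2 : (Finset.univ \ R₀).card ≤ d := by
      have himg : (Finset.univ \ R₀).image f ⊆ (Finset.univ : Finset (Fin d)).image Sum.inr := by
        intro x hx
        obtain ⟨i, hi, rfl⟩ := Finset.mem_image.1 hx
        rw [Finset.mem_sdiff, hR₀, Finset.mem_filter] at hi
        rcases h : f i with j | j
        · exact absurd (by simp [h]) (fun hh => hi.2 ⟨Finset.mem_univ i, hh⟩)
        · exact Finset.mem_image.2 ⟨j, Finset.mem_univ j, rfl⟩
      calc (Finset.univ \ R₀).card = ((Finset.univ \ R₀).image f).card :=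
            (Finset.card_image_of_injective _ hfinj).symm
        _ ≤ ((Finset.univ : Finset (Fin d)).image Sum.inr).card := Finset.card_le_card himg
        _ ≤ d := by
            rw [Finset.card_image_of_injective _ Sum.inr_injective, Finset.card_univ,
              Fintype.card_fin]
    have h3 : R₀.card + (Finset.univ \ R₀).card = m := by
      rw [Finset.card_sdiff_of_subset (Finset.subset_univ _), Finset.card_univ, Fintype.card_fin]
      have := Finset.card_le_univ R₀
      simp only [Finset.card_univ, Fintype.card_fin] at this
      omega
    omega
  obtain ⟨R, hR⟩ := key
  have hsplit : A = rowRestrict A R + rowRestrict A (Finset.univ \ R) := by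
    ext i j
    by_cases h : i ∈ R <;> simp [rowRestrict, h]
  have hb1 : (rowRestrict A R).rank ≤ (R.biUnion nbr).card := by
    apply rank_le_card_support_cols
    intro i j hij
    rw [rowRestrict] at hij
    simp only [Matrix.of_apply] at hij
    by_cases h : i ∈ R
    · rw [if_pos h] at hij
      exact Finset.mem_biUnion.2 ⟨i, h, by simp [hnbr, (hA i j).1 hij]⟩
    · exact absurd rfl (by rwa [if_neg h] at hij)
  have hb2 : (rowRestrict A (Finset.univ \ R)).rank ≤ (Finset.univ \ R).card := by
    apply rank_le_card_support_rows
    intro i j hij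
    rw [rowRestrict] at hij
    simp only [Matrix.of_apply] at hij
    by_cases h : i ∈ Finset.univ \ R
    · exact h
    · exact absurd rfl (by rwa [if_neg h] at hij)
  have hRm : R.card ≤ m := by
    have := Finset.card_le_univ R
    simpa using this
  have hcsd : (Finset.univ \ R).card = m - R.card := by
    rw [Finset.card_sdiff_of_subset (Finset.subset_univ _), Finset.card_univ, Fintype.card_fin]
  have hra : A.rank ≤ (rowRestrict A R).rank + (rowRestrict A (Finset.univ \ R)).rank := by
    conv_lhs => rw [hsplit]
    exact matrix_rank_add_le _ _
  rw [hcsd] at hb2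
  omega

lemma sum_range_two_pow (k : ℕ) : ∑ a ∈ Finset.range k, 2^a = 2^k - 1 := by
  induction k with
  | zero => simp
  | succ k ih =>
    rw [Finset.sum_range_succ, ih]
    have : 1 ≤ 2^k := Nat.one_le_two_pow
    omega

lemma finset_two_pow_inj : ∀ (k : ℕ) (s t : Finset ℕ), s ⊆ Finset.range k →
    t ⊆ Finset.range k → (∑ a ∈ s, 2^a) = (∑ a ∈ t, 2^a) → s = t := by
  intro k
  induction k with
  | zero =>
    intro s t hs ht _
    rw [Finset.range_zero, Finset.subset_empty] at hs ht
    rw [hs, ht]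
  | succ k ih =>
    have hmem : ∀ (u w : Finset ℕ), u ⊆ Finset.range (k+1) → w ⊆ Finset.range (k+1) →
        (∑ a ∈ u, 2^a) = (∑ a ∈ w, 2^a) → k ∈ u → k ∈ w := by
      intro u w hu hw hsum hku
      by_contra hkw
      have hwk : w ⊆ Finset.range k := by
        intro a ha
        have h1 := Finset.mem_range.1 (hw ha)
        have h2 : a ≠ k := fun h => hkw (h ▸ ha)
        exact Finset.mem_range.2 (by omega)
      have h3 : (∑ a ∈ w, 2^a) ≤ 2^k - 1 := by
        calc (∑ a ∈ w, 2^a) ≤ ∑ a ∈ Finset.range k, 2^a :=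
              Finset.sum_le_sum_of_subset hwk
          _ = 2^k - 1 := sum_range_two_pow k
      have h4 : 2^k ≤ ∑ a ∈ u, 2^a := Finset.single_le_sum (fun a _ => Nat.zero_le _) hku
      have : (1:ℕ) ≤ 2^k := Nat.one_le_two_pow
      omega
    intro s t hs ht hsum
    by_cases hk : k ∈ s
    · have hkt : k ∈ t := hmem s t hs ht hsum hk
      have hs' : s.erase k ⊆ Finset.range k := by
        intro a ha
        have h1 := Finset.mem_range.1 (hs (Finset.mem_of_mem_erase ha))
        have h2 := Finset.ne_of_mem_erase ha
        exact Finset.mem_range.2 (by omega)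
      have ht' : t.erase k ⊆ Finset.range k := by
        intro a ha
        have h1 := Finset.mem_range.1 (ht (Finset.mem_of_mem_erase ha))
        have h2 := Finset.ne_of_mem_erase ha
        exact Finset.mem_range.2 (by omega)
      have e1 : (∑ a ∈ s.erase k, 2^a) + 2^k = ∑ a ∈ s, 2^a := Finset.sum_erase_add _ _ hk
      have e2 : (∑ a ∈ t.erase k, 2^a) + 2^k = ∑ a ∈ t, 2^a := Finset.sum_erase_add _ _ hkt
      have := ih (s.erase k) (t.erase k) hs' ht' (by omega)
      rw [← Finset.insert_erase hk, ← Finset.insert_erase hkt, this]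
    · have hkt : k ∉ t := fun hkt => hk (hmem t s ht hs hsum.symm hkt)
      have hs' : s ⊆ Finset.range k := by
        intro a ha
        have h1 := Finset.mem_range.1 (hs ha)
        have h2 : a ≠ k := fun h => hk (h ▸ ha)
        exact Finset.mem_range.2 (by omega)
      have ht' : t ⊆ Finset.range k := by
        intro a ha
        have h1 := Finset.mem_range.1 (ht ha)
        have h2 : a ≠ k := fun h => hkt (h ▸ ha)
        exact Finset.mem_range.2 (by omega)
      exact ih s t hs' ht' hsum

lemma encode_inj {n : ℕ} (a b : ℕ) (x y : Fin n) (h : a * n + (x:ℕ) = b * n + (y:ℕ)) :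
    a = b ∧ (x:ℕ) = (y:ℕ) := by
  have hx := x.isLt
  have hy := y.isLt
  rcases lt_trichotomy a b with hab | hab | hab
  · exfalso
    have : (a+1) * n ≤ b * n := Nat.mul_le_mul_right n hab
    have : a * n + n ≤ b * n := by rw [add_mul, one_mul] at this; omega
    omega
  · subst hab
    exact ⟨rfl, by omega⟩
  · exfalso
    have : (b+1) * n ≤ a * n := Nat.mul_le_mul_right n hab
    have : b * n + n ≤ a * n := by rw [add_mul, one_mul] at this; omega
    omega

lemma encode_lt {m n : ℕ} (p : Fin m × Fin n) : (p.1:ℕ) * n + (p.2:ℕ) < m * n := by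
  have h1 := p.1.isLt
  have h2 := p.2.isLt
  have : ((p.1:ℕ)+1) * n ≤ m * n := Nat.mul_le_mul_right n h1
  rw [add_mul, one_mul] at this
  omega

lemma det_pattern_ne_zero {m n k : ℕ} (P : Finset (Fin m × Fin n)) (r : Fin k → Fin m)
    (c : Fin k → Fin n) (hr : Function.Injective r) (hc : Function.Injective c)
    (hdiag : ∀ i, (r i, c i) ∈ P) :
    (Matrix.of fun i j : Fin k => if (r i, c j) ∈ P then
      (Polynomial.X : Polynomial ℝ)^(2^((r i : ℕ) * n + (c j : ℕ))) else 0).det ≠ 0 := by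
  classical
  set B : Matrix (Fin k) (Fin k) (Polynomial ℝ) := Matrix.of fun i j : Fin k =>
    if (r i, c j) ∈ P then (Polynomial.X : Polynomial ℝ)^(2^((r i : ℕ) * n + (c j : ℕ))) else 0
    with hB
  set K : ℕ := ∑ i : Fin k, 2^((r i : ℕ) * n + (c i : ℕ)) with hK
  have hprod : ∀ σ : Equiv.Perm (Fin k), (∀ i, (r (σ i), c i) ∈ P) →
      ∏ i : Fin k, B (σ i) i = Polynomial.X ^ (∑ i : Fin k, 2^((r (σ i) : ℕ) * n + (c i : ℕ))) := by
    intro σ hall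
    rw [← Finset.prod_pow_eq_pow_sum]
    apply Finset.prod_congr rfl
    intro i _
    simp [hB, hall i]
  have hcoeff : B.det.coeff K = 1 := by
    rw [Matrix.det_apply, Polynomial.finset_sum_coeff]
    rw [Finset.sum_eq_single (1 : Equiv.Perm (Fin k))]
    · rw [Equiv.Perm.sign_one, one_smul, hprod 1 (fun i => by simpa using hdiag i)]
      simp [Polynomial.coeff_X_pow, hK]
    · intro σ _ hσ
      rw [Polynomial.coeff_smul]
      by_cases hall : ∀ i, (r (σ i), c i) ∈ P
      · rw [hprod σ hall, Polynomial.coeff_X_pow, if_neg, smul_zero]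
        intro heq
        apply hσ
        -- from sum equality derive σ = 1
        set a : Fin k → ℕ := fun i => (r (σ i) : ℕ) * n + (c i : ℕ) with ha
        set b : Fin k → ℕ := fun i => (r i : ℕ) * n + (c i : ℕ) with hb
        have hainj : Function.Injective a := by
          intro i i' hii
          have := encode_inj _ _ _ _ hii
          exact hc (Fin.val_injective this.2)
        have hbinj : Function.Injective b := by
          intro i i' hii
          have := encode_inj _ _ _ _ hii
          exact hc (Fin.val_injective this.2)
        have hsa : (Finset.univ.image a) ⊆ Finset.range (m*n) := by
          intro x hx
          obtain ⟨i, _, rfl⟩ := Finset.mem_image.1 hx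
          exact Finset.mem_range.2 (encode_lt (⟨r (σ i), c i⟩ : Fin m × Fin n))
        have hsb : (Finset.univ.image b) ⊆ Finset.range (m*n) := by
          intro x hx
          obtain ⟨i, _, rfl⟩ := Finset.mem_image.1 hx
          exact Finset.mem_range.2 (encode_lt (⟨r i, c i⟩ : Fin m × Fin n))
        have hsumim : (∑ x ∈ Finset.univ.image a, 2^x) = ∑ x ∈ Finset.univ.image b, 2^x := by
          rw [Finset.sum_image (fun i _ i' _ h => hainj h),
            Finset.sum_image (fun i _ i' _ h => hbinj h)]
          rw [hK] at heq
          exact heq.symm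
        have himeq := finset_two_pow_inj (m*n) _ _ hsa hsb hsumim
        apply Equiv.ext
        intro i
        have : b i ∈ Finset.univ.image a := by
          rw [himeq]
          exact Finset.mem_image.2 ⟨i, Finset.mem_univ i, rfl⟩
        obtain ⟨i', _, hi'⟩ := Finset.mem_image.1 this
        have hdec := encode_inj _ _ _ _ hi'
        have hieq : i' = i := hc (Fin.val_injective hdec.2)
        rw [hieq] at hdec
        have : σ i = i := hr (Fin.val_injective ?_)
        · rw [this]; rfl
        · exact_mod_cast hdec.1
      · push_neg at hall
        obtain ⟨i0, hi0⟩ := hall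
        have : ∏ i : Fin k, B (σ i) i = 0 :=
          Finset.prod_eq_zero (Finset.mem_univ i0) (by simp [hB, hi0])
        rw [this, Polynomial.coeff_zero, smul_zero]
    · intro h
      exact absurd (Finset.mem_univ _) h
  intro h
  rw [h, Polynomial.coeff_zero] at hcoeff
  exact zero_ne_one hcoeff

theorem exists_generic {m n : ℕ} (P : Finset (Fin m × Fin n)) :
    ∃ A : Matrix (Fin m) (Fin n) ℝ, HasPattern P A ∧
      ∀ T : Finset (Fin m), nu (patternOn P T) ≤ (rowRestrict A T).rank := by
  classical
  set Bp : Matrix (Fin m) (Fin n) (Polynomial ℝ) := Matrix.of fun i j =>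
    if (i, j) ∈ P then (Polynomial.X : Polynomial ℝ)^(2^((i:ℕ)*n+(j:ℕ))) else 0 with hBp
  set ι := Σ k : Fin (n+1), (Fin (k:ℕ) → Fin m) × (Fin (k:ℕ) → Fin n) with hι
  set q : ι → Polynomial ℝ := fun z => (Bp.submatrix z.2.1 z.2.2).det with hq
  set Z : Set ℝ := (⋃ z : ι, {x | q z ≠ 0 ∧ (q z).IsRoot x}) ∪ {0} with hZ
  have hZfin : Z.Finite := by
    apply Set.Finite.union
    · apply Set.finite_iUnion
      intro z
      by_cases h : q z = 0
      · convert Set.finite_empty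
        ext x
        simp [h]
      · have hsub : {x | q z ≠ 0 ∧ (q z).IsRoot x} ⊆ {x | (q z).IsRoot x} := fun x hx => hx.2
        refine Set.Finite.subset ?_ hsub
        by_contra hinf
        exact h (Polynomial.eq_zero_of_infinite_isRoot _ hinf)
    · exact Set.finite_singleton 0
  obtain ⟨δ, hδ⟩ : ∃ δ : ℝ, δ ∉ Z := (hZfin.infinite_compl.nonempty).imp (fun δ h => h)
  have hδ0 : δ ≠ 0 := fun h => hδ (Or.inr (by simp [h]))
  set A : Matrix (Fin m) (Fin n) ℝ := Matrix.of fun i j =>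
    if (i, j) ∈ P then δ^(2^((i:ℕ)*n+(j:ℕ))) else 0 with hA
  have hApat : HasPattern P A := by
    intro i j
    by_cases h : (i, j) ∈ P
    · simp [hA, h, pow_ne_zero _ hδ0]
    · simp [hA, h]
  refine ⟨A, hApat, ?_⟩
  intro T
  obtain ⟨MT, hMTsub, hMTmatch, hMTcard⟩ := exists_nu (patternOn P T)
  rw [← hMTcard]
  have ekn : MT.card ≤ n := hMTmatch.card_le_n
  set k := MT.card with hk
  let eM : Fin k ≃ {x // x ∈ MT} := MT.equivFin.symm
  set r : Fin k → Fin m := fun i => ((eM i) : Fin m × Fin n).1 with hr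
  set c : Fin k → Fin n := fun i => ((eM i) : Fin m × Fin n).2 with hc
  have hmem : ∀ i, ((eM i) : Fin m × Fin n) ∈ MT := fun i => (eM i).2
  have hrinj : Function.Injective r := by
    intro i i' h
    have := hMTmatch.eq_of_fst (hmem i) (hmem i') h
    exact eM.injective (Subtype.ext this)
  have hcinj : Function.Injective c := by
    intro i i' h
    have := hMTmatch.eq_of_snd (hmem i) (hmem i') h
    exact eM.injective (Subtype.ext this)
  have hdiagP : ∀ i, (r i, c i) ∈ P := by
    intro i
    have := hMTsub (hmem i)
    rw [patternOn, Finset.mem_filter] at this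
    exact this.1
  have hrT : ∀ i, r i ∈ T := by
    intro i
    have := hMTsub (hmem i)
    rw [patternOn, Finset.mem_filter] at this
    exact this.2
  have hdet : (Bp.submatrix r c).det ≠ 0 := by
    have h0 := det_pattern_ne_zero P r c hrinj hcinj hdiagP
    have : Bp.submatrix r c = Matrix.of fun i j : Fin k => if (r i, c j) ∈ P then
        (Polynomial.X : Polynomial ℝ)^(2^((r i : ℕ) * n + (c j : ℕ))) else 0 := by
      ext i j
      simp [hBp, Matrix.submatrix_apply]
    rw [this]
    exact h0
  set z : ι := ⟨⟨k, Nat.lt_succ_of_le ekn⟩, (r, c)⟩ with hz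
  have hqz : q z = (Bp.submatrix r c).det := rfl
  have hnotroot : ¬ (q z).IsRoot δ := by
    intro hroot
    exact hδ (Or.inl (Set.mem_iUnion.2 ⟨z, by rw [hqz]; exact hdet, hroot⟩))
  have hmap : A.submatrix r c = (Bp.submatrix r c).map (Polynomial.eval δ) := by
    ext i j
    simp only [Matrix.submatrix_apply, Matrix.map_apply, hA, hBp, Matrix.of_apply]
    by_cases h : (r i, c j) ∈ P <;> simp [h]
  have hdetA : (A.submatrix r c).det ≠ 0 := by
    rw [hmap]
    have heq2 : Polynomial.eval δ (Bp.submatrix r c).det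
        = ((Bp.submatrix r c).map (Polynomial.eval δ)).det := by
      rw [← Polynomial.coe_evalRingHom, RingHom.map_det (Polynomial.evalRingHom δ),
        RingHom.mapMatrix_apply]
    rw [← heq2]
    intro h0
    exact hnotroot (by rw [hqz]; exact h0)
  have hrank : (A.submatrix r c).rank = k := by
    rw [Matrix.rank_of_isUnit _ ((Matrix.isUnit_iff_isUnit_det _).2 (isUnit_iff_ne_zero.2 hdetA))]
    exact Fintype.card_fin k
  have hsubeq : A.submatrix r c = (rowRestrict A T).submatrix r c := by
    ext i j
    simp [rowRestrict, Matrix.submatrix_apply, hrT i]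
  calc k = (A.submatrix r c).rank := hrank.symm
    _ = ((rowRestrict A T).submatrix r c).rank := by rw [hsubeq]
    _ ≤ (rowRestrict A T).rank := rank_submatrix_le' _ _ _

section Kernel
variable {m n : ℕ}

lemma exists_ne_zero_mulVec_eq_zero (B : Matrix (Fin m) (Fin n) ℝ) (h : B.rank < n) :
    ∃ x : Fin n → ℝ, x ≠ 0 ∧ B.mulVec x = 0 := by
  have hrn := LinearMap.finrank_range_add_finrank_ker B.mulVecLin
  rw [Module.finrank_fintype_fun_eq_card, Fintype.card_fin] at hrn
  have hker : LinearMap.ker B.mulVecLin ≠ ⊥ := by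
    intro h0
    rw [h0, finrank_bot] at hrn
    rw [Matrix.rank] at h
    omega
  obtain ⟨x, hx, hxne⟩ := Submodule.ne_bot_iff _ |>.1 hker
  exact ⟨x, hxne, hx⟩

lemma mulVec_eq_zero_of_rank_eq (B : Matrix (Fin m) (Fin n) ℝ) (h : B.rank = n)
    {x : Fin n → ℝ} (hx : B.mulVec x = 0) : x = 0 := by
  have hrn := LinearMap.finrank_range_add_finrank_ker B.mulVecLin
  rw [Module.finrank_fintype_fun_eq_card, Fintype.card_fin] at hrn
  rw [Matrix.rank] at h
  have hker : Module.finrank ℝ (LinearMap.ker B.mulVecLin) = 0 := by omega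
  have : LinearMap.ker B.mulVecLin = ⊥ := Submodule.finrank_eq_zero.1 hker
  have hxin : x ∈ LinearMap.ker B.mulVecLin := by
    rw [LinearMap.mem_ker, Matrix.mulVecLin_apply]
    exact hx
  rw [this, Submodule.mem_bot] at hxin
  exact hxin

lemma rowRestrict_mulVec (A : Matrix (Fin m) (Fin n) ℝ) (T : Finset (Fin m)) (x : Fin n → ℝ)
    (i : Fin m) : (rowRestrict A T).mulVec x i = if i ∈ T then A.mulVec x i else 0 := by
  by_cases h : i ∈ T
  · simp only [Matrix.mulVec, dotProduct, rowRestrict, Matrix.of_apply, if_pos h]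
  · simp only [Matrix.mulVec, dotProduct, rowRestrict, Matrix.of_apply, if_neg h]
    simp

end Kernel

section CosparkBasics
variable {m n : ℕ}

lemma cospark_set_nonempty (hn : 1 ≤ n) (A : Matrix (Fin m) (Fin n) ℝ) :
    {k : ℕ | ∃ x : Fin n → ℝ, x ≠ 0 ∧ l0 (A.mulVec x) = k}.Nonempty := by
  refine ⟨_, fun _ => (1:ℝ), ?_, rfl⟩
  intro h
  have := congrFun h ⟨0, hn⟩
  simpa using this

lemma cospark_le (A : Matrix (Fin m) (Fin n) ℝ) {x : Fin n → ℝ} (hx : x ≠ 0) :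
    cospark A ≤ l0 (A.mulVec x) :=
  Nat.sInf_le ⟨x, hx, rfl⟩

lemma le_cospark (hn : 1 ≤ n) (A : Matrix (Fin m) (Fin n) ℝ) {k : ℕ}
    (h : ∀ x : Fin n → ℝ, x ≠ 0 → k ≤ l0 (A.mulVec x)) : k ≤ cospark A := by
  apply le_csInf (cospark_set_nonempty hn A)
  rintro b ⟨x, hx, rfl⟩
  exact h x hx

end CosparkBasics

section IVT
variable {m n : ℕ}

lemma nu_insert_le (S : Finset (Fin m × Fin n)) (T : Finset (Fin m)) (a : Fin m) :
    nu (patternOn S (insert a T)) ≤ nu (patternOn S T) + 1 := by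
  classical
  apply nu_le
  intro N hN hNm
  set N' := N.filter (fun p => p.1 ≠ a) with hN'
  have hsub : N' ⊆ patternOn S T := by
    intro p hp
    rw [hN', Finset.mem_filter] at hp
    have h1 := hN hp.1
    rw [patternOn, Finset.mem_filter] at h1 ⊢
    refine ⟨h1.1, ?_⟩
    rcases Finset.mem_insert.1 h1.2 with h | h
    · exact absurd h hp.2
    · exact h
  have hcard1 : (N.filter (fun p => p.1 = a)).card ≤ 1 := by
    apply Finset.card_le_one.2
    intro p hp q hq
    rw [Finset.mem_filter] at hp hq
    exact hNm.eq_of_fst hp.1 hq.1 (hp.2.trans hq.2.symm)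
  have hcards : (N.filter (fun p => p.1 = a)).card +
      (N.filter (fun p => ¬ p.1 = a)).card = N.card :=
    Finset.card_filter_add_card_filter_not _
  have h2 : N'.card ≤ nu (patternOn S T) := card_le_nu hsub (hNm.subset (Finset.filter_subset _ _))
  have : N'.card = (N.filter (fun p => ¬ p.1 = a)).card := rfl
  omega

lemma exists_interm (S : Finset (Fin m × Fin n)) (hnuS : nu S = n)
    (T : Finset (Fin m)) (hT : nu (patternOn S T) ≤ n - 1) :
    ∃ T', T ⊆ T' ∧ nu (patternOn S T') = n - 1 := by
  classical
  suffices h : ∀ k (T : Finset (Fin m)), (Finset.univ \ T).card = k →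
      nu (patternOn S T) ≤ n - 1 → ∃ T', T ⊆ T' ∧ nu (patternOn S T') = n - 1 by
    exact h _ T rfl hT
  intro k
  induction k using Nat.strong_induction_on with
  | _ k ih =>
    intro T hTk hle
    by_cases heq : nu (patternOn S T) = n - 1
    · exact ⟨T, Finset.Subset.refl T, heq⟩
    have hlt : nu (patternOn S T) < n - 1 := lt_of_le_of_ne hle heq
    have hTne : T ≠ Finset.univ := by
      intro h
      rw [h, patternOn_univ, hnuS] at hlt
      omega
    obtain ⟨a, ha⟩ : ∃ a, a ∉ T := by
      by_contra hcon
      push_neg at hcon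
      exact hTne (Finset.eq_univ_iff_forall.2 hcon)
    have hamem : a ∈ Finset.univ \ T := Finset.mem_sdiff.2 ⟨Finset.mem_univ a, ha⟩
    have hksd : (Finset.univ \ insert a T).card = k - 1 := by
      rw [Finset.sdiff_insert]
      rw [Finset.card_erase_of_mem hamem, hTk]
    have hkpos : 1 ≤ k := by
      rw [← hTk]
      exact Finset.card_pos.2 ⟨a, hamem⟩ 
    have hnub : nu (patternOn S (insert a T)) ≤ n - 1 := by
      have := nu_insert_le S T a
      omega
    obtain ⟨T', hT'sub, hT'⟩ := ih (k-1) (by omega) (insert a T) hksd hnub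
    exact ⟨T', (Finset.subset_insert a T).trans hT'sub, hT'⟩

end IVT

theorem spcospark_formula {m n : ℕ} (hn : 1 ≤ n) (S : Finset (Fin m × Fin n))
    (hnuS : nu S = n)
    (OPT : Finset (Fin m)) (hOPT : nu (patternOn S OPT) = n - 1)
    (hmax : ∀ T : Finset (Fin m), nu (patternOn S T) = n - 1 → T.card ≤ OPT.card) :
    spcospark S = m - OPT.card := by
  classical
  -- every matrix with pattern S has cospark ≤ m - |OPT|
  have hub : ∀ A : Matrix (Fin m) (Fin n) ℝ, HasPattern S A → cospark A ≤ m - OPT.card := by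
    intro A hA
    have hrank : (rowRestrict A OPT).rank < n := by
      have h1 := rank_le_nu (hasPattern_rowRestrict hA OPT)
      rw [hOPT] at h1
      omega
    obtain ⟨x, hx0, hxz⟩ := exists_ne_zero_mulVec_eq_zero _ hrank
    have hzero : ∀ i ∈ OPT, A.mulVec x i = 0 := by
      intro i hi
      have := congrFun hxz i
      rw [rowRestrict_mulVec, if_pos hi] at this
      exact this
    have hl0 : l0 (A.mulVec x) ≤ m - OPT.card := by
      rw [l0]
      calc (Finset.univ.filter (fun i => A.mulVec x i ≠ 0)).card
          ≤ (Finset.univ \ OPT).card := by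
            apply Finset.card_le_card
            intro i hi
            rw [Finset.mem_filter] at hi
            rw [Finset.mem_sdiff]
            exact ⟨Finset.mem_univ i, fun hmem => hi.2 (hzero i hmem)⟩
        _ = m - OPT.card := by
            rw [Finset.card_sdiff_of_subset (Finset.subset_univ _), Finset.card_univ, Fintype.card_fin]
    exact (cospark_le A hx0).trans hl0
  -- the generic matrix achieves it
  obtain ⟨A, hA, hAgen⟩ := exists_generic S
  have hach : cospark A = m - OPT.card := by
    apply le_antisymm (hub A hA)
    apply le_cospark hn
    intro x hx0
    set T := Finset.univ.filter (fun i => A.mulVec x i = 0) with hT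
    have hTcard : T.card ≤ OPT.card := by
      by_contra hcon
      push_neg at hcon
      have hnuT : nu (patternOn S T) = n := by
        rcases Nat.lt_or_ge (nu (patternOn S T)) n with h | h
        · exfalso
          obtain ⟨T', hT'sub, hT'⟩ := exists_interm S hnuS T (by omega)
          have h1 := hmax T' hT'
          have h2 := Finset.card_le_card hT'sub
          omega
        · exact le_antisymm nu_le_n h
      have hrT : (rowRestrict A T).rank = n := by
        apply le_antisymm (rowRestrict A T).rank_le_width
        exact le_trans (le_of_eq hnuT.symm) (hAgen T)
      have hker : (rowRestrict A T).mulVec x = 0 := by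
        funext i
        rw [rowRestrict_mulVec]
        by_cases h : i ∈ T
        · rw [if_pos h]
          rw [hT, Finset.mem_filter] at h
          exact h.2.trans (by simp)
        · rw [if_neg h]; rfl
      exact hx0 (mulVec_eq_zero_of_rank_eq _ hrT hker)
    have hl0T : l0 (A.mulVec x) = m - T.card := by
      rw [l0]
      have := Finset.card_filter_add_card_filter_not
        (s := (Finset.univ : Finset (Fin m))) (p := fun i => A.mulVec x i = 0)
      have hcu : (Finset.univ : Finset (Fin m)).card = m := by
        rw [Finset.card_univ, Fintype.card_fin]
      have heqT : (Finset.univ.filter (fun i => ¬ A.mulVec x i = 0)).card =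
          (Finset.univ.filter (fun i => A.mulVec x i ≠ 0)).card := rfl
      have hTc : T.card = (Finset.univ.filter (fun i => A.mulVec x i = 0)).card := by rw [hT]
      omega
    omega
  -- conclude
  rw [spcospark]
  apply le_antisymm
  · refine csSup_le ?_ ?_
    · exact ⟨m - OPT.card, A, hA, hach⟩
    · rintro b ⟨B, hB, rfl⟩
      exact hub B hB
  · refine le_csSup ⟨m - OPT.card, ?_⟩ ⟨A, hA, hach⟩
    rintro b ⟨B, hB, rfl⟩
    exact hub B hB

lemma IsMatching.insert' {m n : ℕ} {N : Finset (Fin m × Fin n)} (h : IsMatching N)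
    {a : Fin m × Fin n} (ha : ∀ q ∈ N, a.1 ≠ q.1 ∧ a.2 ≠ q.2) : IsMatching (insert a N) := by
  intro p hp q hq hne
  by_cases hpa : p = a
  · subst hpa
    have hqN : q ∈ N := by
      rcases Finset.mem_insert.1 hq with h' | h'
      · exact absurd h'.symm (by subst h'; exact hne)
      · exact h'
    exact ha q hqN
  · have hpN : p ∈ N := by
      rcases Finset.mem_insert.1 hp with h' | h'
      · exact absurd h' hpa
      · exact h'
    by_cases hqa : q = a
    · subst hqa
      exact ⟨(ha p hpN).1.symm, (ha p hpN).2.symm⟩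
    · have hqN : q ∈ N := by
        rcases Finset.mem_insert.1 hq with h' | h'
        · exact absurd h' hqa
        · exact h'
      exact h p hpN q hqN hne

theorem lemmaL {m n : ℕ} (hn : 1 ≤ n) (hm : 1 ≤ m) (S : Finset (Fin m × Fin n))
    (OPT : Finset (Fin m))
    (hOPTb : ∀ Q ⊆ patternOn S OPT, IsMatching Q → Q.card ≤ n - 1)
    (M : Finset (Fin m × Fin n)) (hMsub : M ⊆ patternOn S OPT) (hM : IsMatching M)
    (hMcard : M.card = n - 1)
    (J : Finset (Fin m)) (hJOPT : J ⊆ OPT) (hJI : ∀ j ∈ J, ∀ p ∈ M, p.1 ≠ j)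
    (W : Finset (Fin n)) (hW : W = M.image Prod.snd)
    (v : Fin n) (hv : v ∉ W) :
    nu (patternOn S (rowsIn S W)) + J.card ≤ (rowsIn S W).card := by
  classical
  set X : Finset (Fin m) := rowsIn S W with hX
  set SX : Finset (Fin m × Fin n) := patternOn S X with hSX
  have hXmem : ∀ i : Fin m, i ∈ X ↔ ∀ j, (i, j) ∈ S → j ∈ W := by
    intro i
    rw [hX, rowsIn, Finset.mem_filter]
    simp
  have hSXmem : ∀ p : Fin m × Fin n, p ∈ SX ↔ p ∈ S ∧ p.1 ∈ X := by
    intro p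
    rw [hSX, patternOn, Finset.mem_filter]
  have hSXW : ∀ p ∈ SX, p.2 ∈ W := by
    intro p hp
    rw [hSXmem] at hp
    exact (hXmem p.1).1 hp.2 p.2 (by rw [Prod.mk.eta]; exact hp.1)
  have hMS : M ⊆ S := fun p hp => (Finset.mem_filter.1 (hMsub hp)).1
  have hIm : ∀ p ∈ M, p.1 ∈ OPT := fun p hp => (Finset.mem_filter.1 (hMsub hp)).2
  have hWm : ∀ p ∈ M, p.2 ∈ W := by
    intro p hp
    rw [hW]
    exact Finset.mem_image.2 ⟨p, hp, rfl⟩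
  have hcardW : W.card = n - 1 := by
    rw [hW]
    rw [Finset.card_image_of_injOn (fun p hp q hq hpq => hM.eq_of_snd hp hq hpq), hMcard]
  have huniq : ∀ u : Fin n, u ∉ W → u = v := by
    intro u hu
    have hWc : (Finset.univ \ W).card = 1 := by
      rw [Finset.card_sdiff_of_subset (Finset.subset_univ _), Finset.card_univ, Fintype.card_fin, hcardW]
      omega
    obtain ⟨a, ha⟩ := Finset.card_eq_one.1 hWc
    have h1 : u ∈ Finset.univ \ W := Finset.mem_sdiff.2 ⟨Finset.mem_univ u, hu⟩
    have h2 : v ∈ Finset.univ \ W := Finset.mem_sdiff.2 ⟨Finset.mem_univ v, hv⟩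
    rw [ha, Finset.mem_singleton] at h1 h2
    rw [h1, h2]
  have hnotX : ∀ i : Fin m, i ∉ X → (i, v) ∈ S := by
    intro i hi
    rw [hXmem] at hi
    push_neg at hi
    obtain ⟨u, hu, huW⟩ := hi
    rwa [huniq u huW] at hu
  -- the partner function Mrow
  have hpart : ∀ c : Fin n, ∃ i : Fin m, c ∈ W → (i, c) ∈ M := by
    intro c
    by_cases hc : c ∈ W
    · rw [hW] at hc
      obtain ⟨p, hp, hpc⟩ := Finset.mem_image.1 hc
      refine ⟨p.1, fun _ => ?_⟩
      rw [← hpc, Prod.mk.eta]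
      exact hp
    · exact ⟨⟨0, hm⟩, fun hcW => absurd hcW hc⟩
  choose Mrow hMrow using hpart
  have hMrow_uniq : ∀ p ∈ M, p.1 = Mrow p.2 := by
    intro p hp
    have h1 := hMrow p.2 (hWm p hp)
    have := hM.eq_of_snd hp h1 (by rfl)
    rw [this]
  have hMrow_inj : ∀ c ∈ W, ∀ c' ∈ W, Mrow c = Mrow c' → c = c' := by
    intro c hc c' hc' h
    have h1 := hMrow c hc
    have h2 := hMrow c' hc'
    have := hM.eq_of_fst h1 h2 h
    exact congrArg Prod.snd this
  -- the contradiction engine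
  have hcontra : ∀ Q : Finset (Fin m × Fin n), Q ⊆ S → IsMatching Q → Q.card = n - 1 →
      (∀ p ∈ Q, p.1 ∈ OPT) → (∀ p ∈ Q, p.2 ∈ W) →
      ∀ i : Fin m, i ∈ OPT → i ∉ X → (∀ p ∈ Q, p.1 ≠ i) → False := by
    intro Q hQS hQm hQc hQOPT hQW i hiOPT hiX hiQ
    have hivS : (i, v) ∈ S := hnotX i hiX
    have hnm : (i, v) ∉ Q := fun h => hv (hQW _ h)
    have hQ'm : IsMatching (insert (i, v) Q) :=
      hQm.insert' (fun q hq => ⟨fun h => hiQ q hq (h.symm), fun h => hv (by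
        rw [show v = q.2 from h]; exact hQW q hq)⟩)
    have hsub : insert (i, v) Q ⊆ patternOn S OPT := by
      intro p hp
      rcases Finset.mem_insert.1 hp with rfl | hp
      · exact Finset.mem_filter.2 ⟨hivS, hiOPT⟩
      · exact Finset.mem_filter.2 ⟨hQS hp, hQOPT p hp⟩
    have hc : (insert (i, v) Q).card = n := by
      rw [Finset.card_insert_of_notMem hnm, hQc]
      omega
    have := hOPTb _ hsub hQ'm
    omega
  -- J ⊆ X
  have hJX : ∀ j ∈ J, j ∈ X := by
    intro j hj
    by_contra hjX
    exact hcontra M hMS hM hMcard hIm hWm j (hJOPT hj) hjX (fun p hp => hJI j hj p hp)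
  -- Claim P : augmentation along alternating paths
  have claimP : ∀ k (N : Finset (Fin m × Fin n)), N.card = k → N ⊆ SX → IsMatching N →
      ∀ c : Fin n, c ∈ W → (∀ p ∈ N, p.2 ≠ c) →
      (∃ Q : Finset (Fin m × Fin n), Q ⊆ S ∧ IsMatching Q ∧ Q.card = n - 1 ∧
        (∀ p ∈ Q, p.1 ∈ OPT) ∧ (∀ p ∈ Q, p.2 ∈ W) ∧ (∀ c' ∈ W, ∃ p ∈ Q, p.2 = c') ∧
        (∀ p ∈ Q, p.1 ≠ Mrow c) ∧
        (∀ p ∈ Q, ∀ q ∈ N, p.1 = Mrow q.2 → p = (Mrow q.2, q.2))) →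
      ∃ N' : Finset (Fin m × Fin n), N' ⊆ SX ∧ IsMatching N' ∧ N'.card = N.card + 1 ∧
        (∀ p ∈ N', p.2 = c ∨ ∃ q ∈ N, q.2 = p.2) ∧
        (∀ p ∈ N', (∃ q ∈ N, q.1 = p.1) ∨ p.1 = Mrow c ∨ ∃ q ∈ N, p.1 = Mrow q.2) := by
    intro k
    induction k using Nat.strong_induction_on with
    | _ k ih =>
      rintro N hNk hNsub hNm c hcW hcN ⟨Q, hQS, hQm, hQc, hQOPT, hQW, hQsurj, hQnoi, hQstar⟩
      have hiM : (Mrow c, c) ∈ M := hMrow c hcW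
      have hiOPT : Mrow c ∈ OPT := hIm _ hiM
      have hiX : Mrow c ∈ X := by
        by_contra hiX
        exact hcontra Q hQS hQm hQc hQOPT hQW (Mrow c) hiOPT hiX hQnoi
      have hicSX : (Mrow c, c) ∈ SX := (hSXmem _).2 ⟨hMS hiM, hiX⟩
      by_cases hiN : ∃ q ∈ N, q.1 = Mrow c
      · -- recursive case
        obtain ⟨q2, hq2N, hq2i⟩ := hiN
        have hq2SX := hNsub hq2N
        have hc2W : q2.2 ∈ W := hSXW q2 hq2SX
        have hc2c : q2.2 ≠ c := hcN q2 hq2N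
        have hi2 : Mrow q2.2 ≠ Mrow c := by
          intro h
          exact hc2c (hMrow_inj _ hc2W _ hcW h)
        -- Q's edge at column q2.2
        obtain ⟨e, heQ, hec2⟩ := hQsurj q2.2 hc2W
        set N₁ := N.erase q2 with hN₁
        have hN₁sub : N₁ ⊆ SX := fun p hp => hNsub (Finset.mem_of_mem_erase hp)
        have hN₁m : IsMatching N₁ := hNm.subset (Finset.erase_subset _ _)
        have hN₁card : N₁.card = k - 1 := by rw [hN₁, Finset.card_erase_of_mem hq2N, hNk]
        have hkpos : 1 ≤ k := by rw [← hNk]; exact Finset.card_pos.2 ⟨q2, hq2N⟩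
        -- the new certificate Q'
        have hiQ : ∀ p ∈ Q, p.1 ≠ Mrow c := hQnoi
        have hnotmem : (Mrow c, q2.2) ∉ Q.erase e := by
          intro h
          exact hiQ _ (Finset.mem_of_mem_erase h) rfl
        set Q' := insert (Mrow c, q2.2) (Q.erase e) with hQ'
        have herase_m : IsMatching (Q.erase e) := hQm.subset (Finset.erase_subset _ _)
        have hQ'm : IsMatching Q' := by
          apply herase_m.insert'
          intro q hq
          constructor
          · exact fun h => hiQ q (Finset.mem_of_mem_erase hq) h.symm
          · intro h
            have : q = e := hQm.eq_of_snd (Finset.mem_of_mem_erase hq) heQ (by rw [← h, hec2])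
            exact (Finset.ne_of_mem_erase hq) this
        have hQ'S : Q' ⊆ S := by
          intro p hp
          rcases Finset.mem_insert.1 hp with rfl | hp
          · have : (Mrow c, q2.2) = q2 := by
              rw [← hq2i, Prod.mk.eta]
            rw [this]
            exact ((hSXmem q2).1 hq2SX).1
          · exact hQS (Finset.mem_of_mem_erase hp)
        have hQ'c : Q'.card = n - 1 := by
          rw [hQ', Finset.card_insert_of_notMem hnotmem, Finset.card_erase_of_mem heQ, hQc]
          have : 1 ≤ Q.card := Finset.card_pos.2 ⟨e, heQ⟩
          omega
        have hQ'OPT : ∀ p ∈ Q', p.1 ∈ OPT := by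
          intro p hp
          rcases Finset.mem_insert.1 hp with rfl | hp
          · exact hiOPT
          · exact hQOPT _ (Finset.mem_of_mem_erase hp)
        have hQ'W : ∀ p ∈ Q', p.2 ∈ W := by
          intro p hp
          rcases Finset.mem_insert.1 hp with rfl | hp
          · exact hc2W
          · exact hQW _ (Finset.mem_of_mem_erase hp)
        have hQ'surj : ∀ c' ∈ W, ∃ p ∈ Q', p.2 = c' := by
          intro c' hc'
          by_cases h : c' = q2.2
          · exact ⟨(Mrow c, q2.2), Finset.mem_insert_self _ _, h.symm ▸ rfl⟩
          · obtain ⟨p, hp, hp2⟩ := hQsurj c' hc'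
            have hpe : p ≠ e := by
              intro heq
              rw [heq, hec2] at hp2
              exact h hp2.symm
            exact ⟨p, Finset.mem_insert_of_mem (Finset.mem_erase.2 ⟨hpe, hp⟩), hp2⟩
        have hQ'noi : ∀ p ∈ Q', p.1 ≠ Mrow q2.2 := by
          intro p hp
          rcases Finset.mem_insert.1 hp with rfl | hp
          · exact fun h => hi2 h.symm
          · intro h
            have hpQ := Finset.mem_of_mem_erase hp
            have := hQstar p hpQ q2 hq2N h
            have hpe : p = e := by
              apply hQm.eq_of_snd hpQ heQ
              rw [this, hec2]
            exact (Finset.ne_of_mem_erase hp) hpe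
        have hQ'star : ∀ p ∈ Q', ∀ q ∈ N₁, p.1 = Mrow q.2 → p = (Mrow q.2, q.2) := by
          intro p hp q hqN₁ hpq
          have hqN : q ∈ N := Finset.mem_of_mem_erase hqN₁
          have hqW : q.2 ∈ W := hSXW q (hNsub hqN)
          rcases Finset.mem_insert.1 hp with rfl | hp
          · exfalso
            have : q.2 = c := hMrow_inj _ hqW _ hcW (by simpa using hpq.symm)
            exact hcN q hqN this
          · exact hQstar p (Finset.mem_of_mem_erase hp) q hqN hpq
        -- recursive call
        have hcN₁ : ∀ p ∈ N₁, p.2 ≠ q2.2 := by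
          intro p hp h
          have : p = q2 := hNm.eq_of_snd (Finset.mem_of_mem_erase hp) hq2N h
          exact (Finset.ne_of_mem_erase hp) this
        obtain ⟨N'', hN''sub, hN''m, hN''c, hN''cols, hN''rows⟩ :=
          ih (k-1) (by omega) N₁ hN₁card hN₁sub hN₁m q2.2 hc2W hcN₁
            ⟨Q', hQ'S, hQ'm, hQ'c, hQ'OPT, hQ'W, hQ'surj, hQ'noi, hQ'star⟩
        have hiN'' : ∀ p ∈ N'', p.1 ≠ Mrow c := by
          intro p hp h
          rcases hN''rows p hp with ⟨q, hqN₁, hq⟩ | h2 | ⟨q, hqN₁, hq⟩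
          · have hqN : q ∈ N := Finset.mem_of_mem_erase hqN₁
            have : q = q2 := hNm.eq_of_fst hqN hq2N (by rw [hq, h, hq2i])
            exact (Finset.ne_of_mem_erase hqN₁) this
          · exact hi2 (h2.symm.trans h)
          · have hqN : q ∈ N := Finset.mem_of_mem_erase hqN₁
            have hqW : q.2 ∈ W := hSXW q (hNsub hqN)
            have : q.2 = c := hMrow_inj _ hqW _ hcW (by rw [← hq, h])
            exact hcN q hqN this
        have hcN''2 : ∀ p ∈ N'', p.2 ≠ c := by
          intro p hp h
          rcases hN''cols p hp with h2 | ⟨q, hqN₁, hq⟩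
          · exact hc2c (h2.symm.trans h)
          · exact hcN q (Finset.mem_of_mem_erase hqN₁) (by rw [hq, h])
        have hnm2 : (Mrow c, c) ∉ N'' := fun h => hiN'' _ h rfl
        refine ⟨insert (Mrow c, c) N'', ?_, ?_, ?_, ?_, ?_⟩
        · intro p hp
          rcases Finset.mem_insert.1 hp with rfl | hp
          · exact hicSX
          · exact hN''sub hp
        · apply hN''m.insert'
          intro q hq
          exact ⟨fun h => hiN'' q hq h.symm, fun h => hcN''2 q hq h.symm⟩
        · rw [Finset.card_insert_of_notMem hnm2, hN''c, hN₁card, hNk]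
          omega
        · intro p hp
          rcases Finset.mem_insert.1 hp with rfl | hp
          · exact Or.inl rfl
          · rcases hN''cols p hp with h2 | ⟨q, hqN₁, hq⟩
            · exact Or.inr ⟨q2, hq2N, h2.symm⟩
            · exact Or.inr ⟨q, Finset.mem_of_mem_erase hqN₁, hq⟩
        · intro p hp
          rcases Finset.mem_insert.1 hp with rfl | hp
          · exact Or.inr (Or.inl rfl)
          · rcases hN''rows p hp with ⟨q, hqN₁, hq⟩ | h2 | ⟨q, hqN₁, hq⟩
            · exact Or.inl ⟨q, Finset.mem_of_mem_erase hqN₁, hq⟩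
            · exact Or.inr (Or.inr ⟨q2, hq2N, h2⟩)
            · exact Or.inr (Or.inr ⟨q, Finset.mem_of_mem_erase hqN₁, hq⟩)
      · -- base case : Mrow c is not a row of N
        push_neg at hiN
        have hnm : (Mrow c, c) ∉ N := fun h => hiN _ h rfl
        refine ⟨insert (Mrow c, c) N, ?_, ?_, ?_, ?_, ?_⟩
        · intro p hp
          rcases Finset.mem_insert.1 hp with rfl | hp
          · exact hicSX
          · exact hNsub hp
        · apply hNm.insert'
          intro q hq
          exact ⟨fun h => hiN q hq h.symm, fun h => hcN q hq h.symm⟩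
        · rw [Finset.card_insert_of_notMem hnm]
        · intro p hp
          rcases Finset.mem_insert.1 hp with rfl | hp
          · exact Or.inl rfl
          · exact Or.inr ⟨p, hp, rfl⟩
        · intro p hp
          rcases Finset.mem_insert.1 hp with rfl | hp
          · exact Or.inr (Or.inl rfl)
          · exact Or.inl ⟨p, hp, rfl⟩
  -- Claim H : remove all J-rows from a matching in SX
  have claimH : ∀ k (N : Finset (Fin m × Fin n)), (N.filter (fun p => p.1 ∈ J)).card = k →
      N ⊆ SX → IsMatching N →
      ∃ N', N' ⊆ SX ∧ IsMatching N' ∧ N'.card = N.card ∧ ∀ p ∈ N', p.1 ∉ J := by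
    intro k
    induction k using Nat.strong_induction_on with
    | _ k ih =>
      intro N hNk hNsub hNm
      rcases Nat.eq_zero_or_pos k with rfl | hkpos
      · refine ⟨N, hNsub, hNm, rfl, ?_⟩
        intro p hp hpJ
        have : p ∈ N.filter (fun p => p.1 ∈ J) := Finset.mem_filter.2 ⟨hp, hpJ⟩
        rw [Finset.card_eq_zero.1 hNk] at this
        exact absurd this (Finset.notMem_empty p)
      · obtain ⟨p₀, hp₀f⟩ : (N.filter (fun p => p.1 ∈ J)).Nonempty :=
          Finset.card_pos.1 (by omega)
        have hp₀N : p₀ ∈ N := (Finset.mem_filter.1 hp₀f).1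
        have hp₀J : p₀.1 ∈ J := (Finset.mem_filter.1 hp₀f).2
        have hp₀SX := hNsub hp₀N
        have hc₁W : p₀.2 ∈ W := hSXW p₀ hp₀SX
        set N₀ := N.erase p₀ with hN₀
        have hN₀sub : N₀ ⊆ SX := fun p hp => hNsub (Finset.mem_of_mem_erase hp)
        have hN₀m : IsMatching N₀ := hNm.subset (Finset.erase_subset _ _)
        have hcN₀ : ∀ p ∈ N₀, p.2 ≠ p₀.2 := by
          intro p hp h
          exact (Finset.ne_of_mem_erase hp) (hNm.eq_of_snd (Finset.mem_of_mem_erase hp) hp₀N h)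
        -- initial certificate
        have hMc₁ : (Mrow p₀.2, p₀.2) ∈ M := hMrow p₀.2 hc₁W
        have hp₀M : p₀ ∉ M := fun h => hJI p₀.1 hp₀J p₀ h rfl
        have hp₀ne : p₀ ∉ M.erase (Mrow p₀.2, p₀.2) := fun h => hp₀M (Finset.mem_of_mem_erase h)
        set Q₀ := insert p₀ (M.erase (Mrow p₀.2, p₀.2)) with hQ₀
        have hQ₀S : Q₀ ⊆ S := by
          intro p hp
          rcases Finset.mem_insert.1 hp with rfl | hp
          · exact ((hSXmem p).1 hp₀SX).1
          · exact hMS (Finset.mem_of_mem_erase hp)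
        have hQ₀m : IsMatching Q₀ := by
          apply (hM.subset (Finset.erase_subset _ _)).insert'
          intro q hq
          have hqM : q ∈ M := Finset.mem_of_mem_erase hq
          constructor
          · exact fun h => hJI p₀.1 hp₀J q hqM h.symm
          · intro h
            have : q = (Mrow p₀.2, p₀.2) := by
              apply hM.eq_of_snd hqM hMc₁
              rw [← h]
            exact (Finset.ne_of_mem_erase hq) this
        have hQ₀c : Q₀.card = n - 1 := by
          rw [hQ₀, Finset.card_insert_of_notMem hp₀ne, Finset.card_erase_of_mem hMc₁, hMcard]
          have : 1 ≤ M.card := Finset.card_pos.2 ⟨_, hMc₁⟩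
          omega
        have hQ₀OPT : ∀ p ∈ Q₀, p.1 ∈ OPT := by
          intro p hp
          rcases Finset.mem_insert.1 hp with rfl | hp
          · exact hJOPT hp₀J
          · exact hIm _ (Finset.mem_of_mem_erase hp)
        have hQ₀W : ∀ p ∈ Q₀, p.2 ∈ W := by
          intro p hp
          rcases Finset.mem_insert.1 hp with rfl | hp
          · exact hc₁W
          · exact hWm _ (Finset.mem_of_mem_erase hp)
        have hQ₀surj : ∀ c' ∈ W, ∃ p ∈ Q₀, p.2 = c' := by
          intro c' hc'
          by_cases h : c' = p₀.2
          · exact ⟨p₀, Finset.mem_insert_self _ _, h.symm⟩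
          · refine ⟨(Mrow c', c'), Finset.mem_insert_of_mem (Finset.mem_erase.2 ⟨?_, hMrow c' hc'⟩), rfl⟩
            intro heq
            have : c' = p₀.2 := congrArg Prod.snd heq
            exact h this
        have hQ₀noi : ∀ p ∈ Q₀, p.1 ≠ Mrow p₀.2 := by
          intro p hp
          rcases Finset.mem_insert.1 hp with rfl | hp
          · exact fun h => hJI p.1 hp₀J _ hMc₁ h.symm
          · intro h
            have hpM : p ∈ M := Finset.mem_of_mem_erase hp
            have : p = (Mrow p₀.2, p₀.2) := hM.eq_of_fst hpM hMc₁ h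
            exact (Finset.ne_of_mem_erase hp) this
        have hQ₀star : ∀ p ∈ Q₀, ∀ q ∈ N₀, p.1 = Mrow q.2 → p = (Mrow q.2, q.2) := by
          intro p hp q hqN₀ hpq
          have hqW : q.2 ∈ W := hSXW q (hN₀sub hqN₀)
          have hMq : (Mrow q.2, q.2) ∈ M := hMrow q.2 hqW
          rcases Finset.mem_insert.1 hp with rfl | hp
          · exact (hJI p.1 hp₀J _ hMq hpq.symm).elim
          · exact hM.eq_of_fst (Finset.mem_of_mem_erase hp) hMq hpq
        obtain ⟨N', hN'sub, hN'm, hN'c, hN'cols, hN'rows⟩ :=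
          claimP N₀.card N₀ rfl hN₀sub hN₀m p₀.2 hc₁W hcN₀
            ⟨Q₀, hQ₀S, hQ₀m, hQ₀c, hQ₀OPT, hQ₀W, hQ₀surj, hQ₀noi, hQ₀star⟩
        have hNpos : 1 ≤ N.card := Finset.card_pos.2 ⟨p₀, hp₀N⟩
        have hN'card : N'.card = N.card := by
          rw [hN'c, hN₀, Finset.card_erase_of_mem hp₀N]
          omega
        -- J-rows decreased
        have hfilter : (N'.filter (fun p => p.1 ∈ J)).card ≤ k - 1 := by
          have hsub2 : (N'.filter (fun p => p.1 ∈ J)).image Prod.fst ⊆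
              (N₀.filter (fun p => p.1 ∈ J)).image Prod.fst := by
            intro x hx
            obtain ⟨p, hp, rfl⟩ := Finset.mem_image.1 hx
            rw [Finset.mem_filter] at hp
            rcases hN'rows p hp.1 with ⟨q, hqN₀, hq⟩ | h2 | ⟨q, hqN₀, hq⟩
            · exact Finset.mem_image.2 ⟨q, Finset.mem_filter.2 ⟨hqN₀, by rw [hq]; exact hp.2⟩, hq⟩
            · exfalso
              exact hJI p.1 hp.2 _ hMc₁ h2.symm
            · exfalso
              have hqW : q.2 ∈ W := hSXW q (hN₀sub hqN₀)
              exact hJI p.1 hp.2 _ (hMrow q.2 hqW) hq.symm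
          have h1 : (N'.filter (fun p => p.1 ∈ J)).card =
              ((N'.filter (fun p => p.1 ∈ J)).image Prod.fst).card :=
            ((hN'm.subset (Finset.filter_subset _ _)).card_image_fst).symm
          have h2 : ((N₀.filter (fun p => p.1 ∈ J)).image Prod.fst).card =
              (N₀.filter (fun p => p.1 ∈ J)).card :=
            (hN₀m.subset (Finset.filter_subset _ _)).card_image_fst
          have h3 : (N₀.filter (fun p => p.1 ∈ J)).card = k - 1 := by
            rw [hN₀, Finset.filter_erase, Finset.card_erase_of_mem hp₀f, hNk]
          calc (N'.filter (fun p => p.1 ∈ J)).card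
              = ((N'.filter (fun p => p.1 ∈ J)).image Prod.fst).card := h1
            _ ≤ ((N₀.filter (fun p => p.1 ∈ J)).image Prod.fst).card := Finset.card_le_card hsub2
            _ = (N₀.filter (fun p => p.1 ∈ J)).card := h2
            _ = k - 1 := h3
        obtain ⟨N'', hfin⟩ := ih ((N'.filter (fun p => p.1 ∈ J)).card) (by omega) N' rfl
          hN'sub hN'm
        exact ⟨N'', hfin.1, hfin.2.1, by rw [hfin.2.2.1, hN'card], hfin.2.2.2⟩
  -- conclude
  obtain ⟨N, hNsub, hNm, hNcard⟩ := exists_nu SX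
  obtain ⟨N', hN'sub, hN'm, hN'card, hN'J⟩ := claimH _ N rfl hNsub hNm
  have hrows : N'.image Prod.fst ⊆ X \ J := by
    intro x hx
    obtain ⟨p, hp, rfl⟩ := Finset.mem_image.1 hx
    exact Finset.mem_sdiff.2 ⟨((hSXmem p).1 (hN'sub hp)).2, hN'J p hp⟩
  have h1 : nu SX = (N'.image Prod.fst).card := by
    rw [hN'm.card_image_fst, hN'card, hNcard]
  have h2 : (X \ J).card = X.card - J.card := Finset.card_sdiff_of_subset (fun j hj => hJX j hj)
  have h3 : J.card ≤ X.card := Finset.card_le_card (fun j hj => hJX j hj)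
  have := Finset.card_le_card hrows
  omega


lemma rowRestrict_univ {m n : ℕ} (A : Matrix (Fin m) (Fin n) ℝ) :
    rowRestrict A Finset.univ = A := by
  ext i j
  simp [rowRestrict]

lemma sprank_eq_nu {m n : ℕ} (P : Finset (Fin m × Fin n)) : sprank P = nu P := by
  apply le_antisymm
  · exact sprank_le (fun A hA => rank_le_nu hA)
  · obtain ⟨A, hA, hgen⟩ := exists_generic P
    have h1 := hgen Finset.univ
    rw [patternOn_univ, rowRestrict_univ] at h1
    exact h1.trans (rank_le_sprank hA)

theorem stmt14 {m n : ℕ} (hn : 1 ≤ n) (hmn : n < m) (S : Finset (Fin m × Fin n))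
    (hspr : sprank S = n)
    (OPT : Finset (Fin m)) (hOPT : nu (patternOn S OPT) = n - 1)
    (hmax : ∀ T : Finset (Fin m), nu (patternOn S T) = n - 1 → T.card ≤ OPT.card)
    (M : Finset (Fin m × Fin n)) (hMsub : M ⊆ patternOn S OPT)
    (hM : IsMatching M) (hMcard : M.card = n - 1)
    (I : Finset (Fin m)) (hI : I = M.image Prod.fst)
    (J : Finset (Fin m)) (hJ : J = OPT \ I) (hJne : J.Nonempty)
    (W : Finset (Fin n)) (hW : W = M.image Prod.snd)
    (v : Fin n) (hv : v ∉ W)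
    (F : Finset (Fin m)) (hFsub : rowsIn S W ⊆ F)
    (hFrank : sprank (patternOn S F) = n - 1)
    (hFcard : (n - 1) - sprank (patternOn S (rowsIn S W)) ≤ (F \ rowsIn S W).card) :
    F.card = OPT.card ∧ m - F.card = spcospark S := by
  classical
  have hm1 : 1 ≤ m := by omega
  have hnuS : nu S = n := by rw [← sprank_eq_nu]; exact hspr
  have hnuF : nu (patternOn S F) = n - 1 := by rw [← sprank_eq_nu]; exact hFrank
  have hFle : F.card ≤ OPT.card := hmax F hnuF
  have hOPTb : ∀ Q ⊆ patternOn S OPT, IsMatching Q → Q.card ≤ n - 1 := by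
    intro Q hQ hQm
    have := card_le_nu hQ hQm
    rwa [hOPT] at this
  have hJI : ∀ j ∈ J, ∀ p ∈ M, p.1 ≠ j := by
    intro j hj p hp h
    rw [hJ, Finset.mem_sdiff] at hj
    exact hj.2 (by rw [hI]; exact Finset.mem_image.2 ⟨p, hp, h⟩)
  have hJOPT : J ⊆ OPT := by
    rw [hJ]
    exact Finset.sdiff_subset
  have hL := lemmaL hn hm1 S OPT hOPTb M hMsub hM hMcard J hJOPT hJI W hW v hv
  have hIsub : I ⊆ OPT := by
    rw [hI]
    intro i hi
    obtain ⟨p, hp, rfl⟩ := Finset.mem_image.1 hi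
    exact (Finset.mem_filter.1 (hMsub hp)).2
  have hIcard : I.card = n - 1 := by rw [hI, hM.card_image_fst, hMcard]
  have hIle : I.card ≤ OPT.card := Finset.card_le_card hIsub
  have hJcard : J.card = OPT.card - I.card := by rw [hJ, Finset.card_sdiff_of_subset hIsub]
  set X : Finset (Fin m) := rowsIn S W with hXdef
  have hsx : sprank (patternOn S X) = nu (patternOn S X) := sprank_eq_nu _
  rw [hsx] at hFcard
  have hXle : X.card ≤ F.card := Finset.card_le_card hFsub
  have hFXcard : (F \ X).card = F.card - X.card := Finset.card_sdiff_of_subset hFsub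
  have hmain : OPT.card ≤ F.card := by omega
  have hcardeq : F.card = OPT.card := le_antisymm hFle hmain
  refine ⟨hcardeq, ?_⟩
  rw [hcardeq, spcospark_formula hn S hnuS OPT hOPT hmax]
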